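/- arXiv:1503.03903 — 2 statements merged into one kernel-verified Lean document; each statement's English description precedes it below -/
import Mathlib

section
/- (Sparse PCA from a Sketch.) Let A, Ã ∈ ℝ^{m×n}, let 1 ≤ k ≤ n and 1 ≤ r ≤ n. Suppose S_k ∈ S(n,k,r) satisfies trace(S_kᵀ Aᵀ A S_k) ≥ trace(Vᵀ Aᵀ A V) for all V ∈ S(n,k,r), and S̃_k ∈ S(n,k,r) satisfies trace(S̃_kᵀ Ãᵀ Ã S̃_k) ≥ trace(Vᵀ Ãᵀ Ã V) for all V ∈ S(n,k,r). Then trace(S̃_kᵀ Aᵀ A S̃_k) ≥ trace(S_kᵀ Aᵀ A S_k) − 2k · ‖Aᵀ A − Ãᵀ Ã‖₂. -/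
open Matrix

/-- The spectral norm of a real matrix: the operator norm induced by the
Euclidean vector norms (equal to the largest singular value). -/
noncomputable def specNorm {m n : ℕ} (A : Matrix (Fin m) (Fin n) ℝ) : ℝ :=
  ‖LinearMap.toContinuousLinearMap (Matrix.toEuclideanLin A)‖

/-- The Frobenius norm of a real matrix. -/
noncomputable def frobNorm {m n : ℕ} (A : Matrix (Fin m) (Fin n) ℝ) : ℝ :=
  Real.sqrt (∑ i, ∑ j, (A i j) ^ 2)

/-- The r-sparse Stiefel set: n×k real matrices V with VᵀV = I and each
column having at most r nonzero entries. -/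
def sparseStiefel (n k r : ℕ) : Set (Matrix (Fin n) (Fin k) ℝ) :=
  {V | Vᵀ * V = 1 ∧ ∀ j, (Finset.univ.filter fun i => V i j ≠ 0).card ≤ r}

open RealInnerProductSpace in
/-- For a matrix `V` with orthonormal columns, `|trace(Vᵀ M V)| ≤ k ‖M‖₂`. -/
lemma trace_quad_bound {n k : ℕ} (M : Matrix (Fin n) (Fin n) ℝ)
    (V : Matrix (Fin n) (Fin k) ℝ) (hV : Vᵀ * V = 1) :
    |Matrix.trace (Vᵀ * M * V)| ≤ (k : ℝ) * specNorm M := by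
  set T := LinearMap.toContinuousLinearMap (Matrix.toEuclideanLin M) with hT
  have key : ∀ j : Fin k, |∑ l, V l j * (M *ᵥ fun i => V i j) l| ≤ specNorm M := by
    intro j
    set x : EuclideanSpace ℝ (Fin n) := (WithLp.equiv 2 (Fin n → ℝ)).symm (fun i => V i j)
    have hx : ‖x‖ = 1 := by
      have h1 : (Vᵀ * V) j j = 1 := by rw [hV]; simp
      have : ‖x‖ ^ 2 = 1 := by
        rw [← real_inner_self_eq_norm_sq, PiLp.inner_apply]
        simpa [x, Matrix.mul_apply, Matrix.transpose_apply,
          RCLike.inner_apply, mul_comm, sq] using h1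
      nlinarith [norm_nonneg x]
    have hinner : (∑ l, V l j * (M *ᵥ fun i => V i j) l) = ⟪x, T x⟫ := by
      simp [x, hT, PiLp.inner_apply, RCLike.inner_apply, Matrix.toEuclideanLin_apply,
        LinearMap.coe_toContinuousLinearMap']
      exact Finset.sum_congr rfl fun _ _ => mul_comm _ _
    rw [hinner]
    calc |⟪x, T x⟫| ≤ ‖x‖ * ‖T x‖ := abs_real_inner_le_norm x (T x)
      _ ≤ ‖x‖ * (‖T‖ * ‖x‖) := by
          gcongr; exact T.le_opNorm x
      _ = ‖T‖ := by rw [hx]; ring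
      _ = specNorm M := rfl
  have htr : Matrix.trace (Vᵀ * M * V) = ∑ j, ∑ l, V l j * (M *ᵥ fun i => V i j) l := by
    simp [Matrix.trace, Matrix.diag, Matrix.mul_apply, Matrix.mulVec, dotProduct,
      Finset.mul_sum, Finset.sum_mul]
    congr 1; ext j; rw [Finset.sum_comm]; congr 1; ext l; congr 1; ext i; ring
  rw [htr]
  calc |∑ j, ∑ l, V l j * (M *ᵥ fun i => V i j) l| ≤ ∑ j : Fin k, specNorm M := by
        refine (Finset.abs_sum_le_sum_abs _ _).trans ?_
        exact Finset.sum_le_sum fun j _ => key j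
    _ = (k : ℝ) * specNorm M := by simp [mul_comm]

/-- Sparse PCA from a sketch: the optimal sparse components of the sketch `Ã`
capture, with respect to `A`, at least the optimal variance minus
`2k ‖AᵀA - ÃᵀÃ‖₂`. -/
theorem sparse_pca_from_sketch {m n k r : ℕ}
    (hk : 1 ≤ k) (hkn : k ≤ n) (hr : 1 ≤ r) (hrn : r ≤ n)
    (A At : Matrix (Fin m) (Fin n) ℝ)
    (Sk Stk : Matrix (Fin n) (Fin k) ℝ)
    (hSk : Sk ∈ sparseStiefel n k r) (hStk : Stk ∈ sparseStiefel n k r)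
    (hSkMax : ∀ V ∈ sparseStiefel n k r,
      Matrix.trace (Vᵀ * Aᵀ * A * V) ≤ Matrix.trace (Skᵀ * Aᵀ * A * Sk))
    (hStkMax : ∀ V ∈ sparseStiefel n k r,
      Matrix.trace (Vᵀ * Atᵀ * At * V) ≤ Matrix.trace (Stkᵀ * Atᵀ * At * Stk)) :
    Matrix.trace (Stkᵀ * Aᵀ * A * Stk) ≥
      Matrix.trace (Skᵀ * Aᵀ * A * Sk) - 2 * (k : ℝ) * specNorm (Aᵀ * A - Atᵀ * At) := by
  have h1 := trace_quad_bound (Aᵀ*A - Atᵀ*At) Sk hSk.1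
  have h2 := trace_quad_bound (Aᵀ*A - Atᵀ*At) Stk hStk.1
  have h3 := hStkMax Sk hSk
  have e1 : ∀ (W : Matrix (Fin n) (Fin k) ℝ),
      Matrix.trace (Wᵀ * (Aᵀ*A - Atᵀ*At) * W) =
      Matrix.trace (Wᵀ * Aᵀ * A * W) - Matrix.trace (Wᵀ * Atᵀ * At * W) := by
    intro W
    simp only [Matrix.mul_sub, Matrix.sub_mul, Matrix.trace_sub, Matrix.mul_assoc]
  rw [e1] at h1 h2
  rw [abs_le] at h1 h2
  linarith [h1.1, h1.2, h2.1, h2.2]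
end

section
/- (Sparse PCA after greedy thresholding.) Let A ∈ ℝ^{m×n} be nonzero, let δ > 0 and ε > 0, and let Ã ∈ ℝ^{m×n} be defined entrywise by Ã_{ij} = A_{ij} if |A_{ij}| ≥ δ and Ã_{ij} = 0 if |A_{ij}| < δ. Let k̃ = ‖A‖_F² / ‖A‖₂² be the stable rank of A, and suppose ∑_{(i,j): |A_{ij}| < δ} A_{ij}² ≤ ε² · ‖A‖_F² / k̃. Let 1 ≤ k ≤ n and 1 ≤ r ≤ n, and suppose V* ∈ S(n,k,r) satisfies trace(V*ᵀ Aᵀ A V*) ≥ trace(Vᵀ Aᵀ A V) for all V ∈ S(n,k,r), and Ṽ* ∈ S(n,k,r) satisfies trace(Ṽ*ᵀ Ãᵀ Ã Ṽ*) ≥ trace(Vᵀ Ãᵀ Ã V) for all V ∈ S(n,k,r). Then trace(Ṽ*ᵀ Aᵀ A Ṽ*) ≥ trace(V*ᵀ Aᵀ A V*) − 2kε · ‖A‖₂² · (2 + ε). -/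
open Matrix

attribute [local instance] Matrix.frobeniusNormedAddCommGroup

lemma mulVec_sq_sum_le {m n : ℕ} (B : Matrix (Fin m) (Fin n) ℝ) (x : Fin n → ℝ) :
    ∑ i, (B.mulVec x i) ^ 2 ≤ specNorm B ^ 2 * ∑ j, (x j) ^ 2 := by
  have h := (LinearMap.toContinuousLinearMap (Matrix.toEuclideanLin B)).le_opNorm
    ((WithLp.equiv 2 (Fin n → ℝ)).symm x)
  rw [LinearMap.coe_toContinuousLinearMap'] at h
  have hx : ‖(WithLp.equiv 2 (Fin n → ℝ)).symm x‖ = Real.sqrt (∑ j, (x j)^2) := by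
    rw [EuclideanSpace.norm_eq]
    congr 1; exact Finset.sum_congr rfl fun j _ => by rw [Real.norm_eq_abs, sq_abs]; rfl
  have hy : ‖Matrix.toEuclideanLin B ((WithLp.equiv 2 (Fin n → ℝ)).symm x)‖
      = Real.sqrt (∑ i, (B.mulVec x i)^2) := by
    rw [show Matrix.toEuclideanLin B ((WithLp.equiv 2 (Fin n → ℝ)).symm x) = WithLp.toLp 2 (B *ᵥ x) from rfl, EuclideanSpace.norm_eq]
    congr 1; exact Finset.sum_congr rfl fun i _ => by rw [Real.norm_eq_abs, sq_abs]
  rw [hx, hy] at h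
  have h2 : Real.sqrt (∑ i, (B.mulVec x i)^2) ^ 2 ≤ (specNorm B * Real.sqrt (∑ j, (x j)^2))^2 := by
    apply sq_le_sq' _ h
    nlinarith [Real.sqrt_nonneg (∑ i, (B.mulVec x i)^2), Real.sqrt_nonneg (∑ j, (x j)^2),
      norm_nonneg (LinearMap.toContinuousLinearMap (Matrix.toEuclideanLin B))]
  rw [Real.sq_sqrt (by positivity), mul_pow, Real.sq_sqrt (by positivity)] at h2
  exact h2

lemma frobNorm_eq_norm {p q : ℕ} (M : Matrix (Fin p) (Fin q) ℝ) : frobNorm M = ‖M‖ := by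
  rw [Matrix.frobenius_norm_def, frobNorm, Real.sqrt_eq_rpow]
  congr 1
  exact Finset.sum_congr rfl fun i _ => Finset.sum_congr rfl fun j _ => by
    rw [show ((2:ℝ)) = ((2:ℕ):ℝ) from by norm_num, Real.rpow_natCast,
      Real.norm_eq_abs, sq_abs]


lemma frobNorm_nonneg {p q : ℕ} (M : Matrix (Fin p) (Fin q) ℝ) : 0 ≤ frobNorm M :=
  Real.sqrt_nonneg _

lemma frobNorm_sq {p q : ℕ} (M : Matrix (Fin p) (Fin q) ℝ) :
    frobNorm M ^ 2 = ∑ i, ∑ j, (M i j) ^ 2 :=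
  Real.sq_sqrt (by positivity)

lemma frobNorm_sub_le {p q : ℕ} (M N : Matrix (Fin p) (Fin q) ℝ) :
    frobNorm M - frobNorm N ≤ frobNorm (M - N) := by
  rw [frobNorm_eq_norm, frobNorm_eq_norm, frobNorm_eq_norm]
  exact norm_sub_norm_le M N

-- trace identity
lemma trace_eq_frob_sq {p n k : ℕ} (B : Matrix (Fin p) (Fin n) ℝ) (V : Matrix (Fin n) (Fin k) ℝ) :
    Matrix.trace (Vᵀ * Bᵀ * B * V) = frobNorm (B * V) ^ 2 := by
  rw [frobNorm_sq]
  have : Vᵀ * Bᵀ * B * V = (B * V)ᵀ * (B * V) := by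
    rw [Matrix.transpose_mul, Matrix.mul_assoc]
  rw [this, Matrix.trace, Finset.sum_comm]
  simp [Matrix.diag, Matrix.mul_apply, sq, mul_comm]

-- column bound: frobNorm (B*V)^2 ≤ k * specNorm B ^2 when VᵀV = 1
lemma frob_mul_le_spec {p n k : ℕ} (B : Matrix (Fin p) (Fin n) ℝ)
    (V : Matrix (Fin n) (Fin k) ℝ) (hV : Vᵀ * V = 1) :
    frobNorm (B * V) ^ 2 ≤ (k : ℝ) * specNorm B ^ 2 := by
  rw [frobNorm_sq, Finset.sum_comm]
  have hcol : ∀ j : Fin k, ∑ i, ((B * V) i j) ^ 2 ≤ specNorm B ^ 2 := by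
    intro j
    have h1 : ∀ i, (B * V) i j = B.mulVec (fun l => V l j) i := by
      intro i; simp [Matrix.mul_apply, Matrix.mulVec, dotProduct]
    calc ∑ i, ((B * V) i j) ^ 2 = ∑ i, (B.mulVec (fun l => V l j) i) ^ 2 := by
          exact Finset.sum_congr rfl fun i _ => by rw [h1]
      _ ≤ specNorm B ^ 2 * ∑ l, (V l j) ^ 2 := mulVec_sq_sum_le _ _
      _ = specNorm B ^ 2 := by
          have : ∑ l, (V l j) ^ 2 = (Vᵀ * V) j j := by
            simp [Matrix.mul_apply, sq]
          rw [this, hV]; simp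
  calc ∑ j, ∑ i, ((B * V) i j) ^ 2 ≤ ∑ j : Fin k, specNorm B ^ 2 :=
        Finset.sum_le_sum fun j _ => hcol j
    _ = (k : ℝ) * specNorm B ^ 2 := by simp [mul_comm]

-- row bound: frobNorm (E*V) ≤ frobNorm E when VᵀV = 1
lemma frob_mul_le_frob {p n k : ℕ} (E : Matrix (Fin p) (Fin n) ℝ)
    (V : Matrix (Fin n) (Fin k) ℝ) (hV : Vᵀ * V = 1) :
    frobNorm (E * V) ≤ frobNorm E := by
  apply Real.sqrt_le_sqrt
  apply Finset.sum_le_sum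
  intro i _
  -- row r = E i, show ∑ j, (∑ l, r l * V l j)^2 ≤ ∑ l, r l ^2
  set r : Fin n → ℝ := fun l => E i l with hr
  have key : ∑ j, (Vᵀ.mulVec r j) ^ 2 ≤ ∑ l, (r l) ^ 2 := by
    set u : Fin k → ℝ := Vᵀ.mulVec r with hu
    set pvec : Fin n → ℝ := V.mulVec u with hp
    have h1 : ∑ l, r l * pvec l = ∑ j, (u j) ^ 2 := by
      have : r ⬝ᵥ V.mulVec u = Vᵀ.mulVec r ⬝ᵥ u := by
        rw [Matrix.dotProduct_mulVec, ← Matrix.mulVec_transpose]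
      simpa [dotProduct, sq] using this
    have h2 : ∑ l, (pvec l) ^ 2 = ∑ j, (u j) ^ 2 := by
      have : V.mulVec u ⬝ᵥ V.mulVec u = u ⬝ᵥ u := by
        rw [Matrix.dotProduct_mulVec, ← Matrix.mulVec_transpose,
          Matrix.mulVec_mulVec, hV, Matrix.one_mulVec]
      simpa [dotProduct, sq] using this
    have h3 : 0 ≤ ∑ l, (r l - pvec l) ^ 2 := by positivity
    have h4 : ∑ l, (r l - pvec l) ^ 2
        = ∑ l, (r l)^2 - 2 * ∑ l, r l * pvec l + ∑ l, (pvec l)^2 := by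
      calc ∑ l, (r l - pvec l)^2
          = ∑ l, ((r l)^2 - 2*(r l * pvec l) + (pvec l)^2) :=
            Finset.sum_congr rfl fun l _ => by ring
        _ = ∑ l, (r l)^2 - 2 * ∑ l, r l * pvec l + ∑ l, (pvec l)^2 := by
            rw [Finset.sum_add_distrib, Finset.sum_sub_distrib, Finset.mul_sum]
    rw [h4, h1, h2] at h3
    linarith
  have heq : ∀ j, (E * V) i j = Vᵀ.mulVec r j := by
    intro j; simp [Matrix.mul_apply, Matrix.mulVec, dotProduct, hr, mul_comm]
  calc ∑ j, ((E * V) i j) ^ 2 = ∑ j, (Vᵀ.mulVec r j) ^ 2 :=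
        Finset.sum_congr rfl fun j _ => by rw [heq]
    _ ≤ ∑ l, (r l) ^ 2 := key

lemma specNorm_pos {m n : ℕ} (A : Matrix (Fin m) (Fin n) ℝ) (hA : A ≠ 0) : 0 < specNorm A := by
  rw [specNorm, norm_pos_iff]
  intro h
  exact hA ((LinearEquiv.map_eq_zero_iff Matrix.toEuclideanLin).mp
    ((LinearEquiv.map_eq_zero_iff LinearMap.toContinuousLinearMap).mp h))

lemma frobNorm_pos {m n : ℕ} (A : Matrix (Fin m) (Fin n) ℝ) (hA : A ≠ 0) : 0 < frobNorm A := by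
  rw [frobNorm, Real.sqrt_pos]
  have : ∃ i j, A i j ≠ 0 := by
    by_contra h; push_neg at h
    exact hA (Matrix.ext fun i j => h i j)
  obtain ⟨i, j, hij⟩ := this
  have h1 : 0 < ∑ j', (A i j') ^ 2 :=
    Finset.sum_pos' (fun _ _ => sq_nonneg _) ⟨j, Finset.mem_univ j, by positivity⟩
  exact Finset.sum_pos' (fun _ _ => Finset.sum_nonneg fun _ _ => sq_nonneg _)
    ⟨i, Finset.mem_univ i, h1⟩

set_option maxHeartbeats 1000000 in
/-- Sparse PCA after greedy thresholding: if zeroing the entries of `A`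
smaller than `δ` loses at most an `ε²/k̃` fraction of the squared Frobenius
norm (`k̃ = ‖A‖_F²/‖A‖₂²` the stable rank), then the optimal sparse principal
components of the thresholded matrix `Ã` lose at most `2kε(2 + ε)‖A‖₂²`
variance with respect to `A`. -/
theorem sparse_pca_after_thresholding {m n k r : ℕ}
    (hk : 1 ≤ k) (hkn : k ≤ n) (hr : 1 ≤ r) (hrn : r ≤ n)
    (A At : Matrix (Fin m) (Fin n) ℝ) (hA : A ≠ 0)
    (δ ε : ℝ) (hδ : 0 < δ) (hε : 0 < ε)
    (hAt : ∀ i j, At i j = if δ ≤ |A i j| then A i j else 0)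
    (htrunc : (∑ i, ∑ j, if |A i j| < δ then (A i j) ^ 2 else 0) ≤
      ε ^ 2 * frobNorm A ^ 2 / (frobNorm A ^ 2 / specNorm A ^ 2))
    (Vstar Vtstar : Matrix (Fin n) (Fin k) ℝ)
    (hVstar : Vstar ∈ sparseStiefel n k r) (hVtstar : Vtstar ∈ sparseStiefel n k r)
    (hVstarMax : ∀ V ∈ sparseStiefel n k r,
      Matrix.trace (Vᵀ * Aᵀ * A * V) ≤ Matrix.trace (Vstarᵀ * Aᵀ * A * Vstar))
    (hVtstarMax : ∀ V ∈ sparseStiefel n k r,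
      Matrix.trace (Vᵀ * Atᵀ * At * V) ≤ Matrix.trace (Vtstarᵀ * Atᵀ * At * Vtstar)) :
    Matrix.trace (Vtstarᵀ * Aᵀ * A * Vtstar) ≥
      Matrix.trace (Vstarᵀ * Aᵀ * A * Vstar) - 2 * (k : ℝ) * ε * specNorm A ^ 2 * (2 + ε) := by
  set S := specNorm A with hS
  have hSpos : 0 < S := specNorm_pos A hA
  have hFpos : 0 < frobNorm A := frobNorm_pos A hA
  set E := A - At with hEdef
  have hE : ∀ i j, E i j = if |A i j| < δ then A i j else 0 := by
    intro i j
    rw [hEdef, Matrix.sub_apply, hAt]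
    by_cases h : δ ≤ |A i j|
    · rw [if_pos h, if_neg (not_lt.mpr h), sub_self]
    · rw [if_neg h, if_pos (not_le.mp h), sub_zero]
  have hEF2 : frobNorm E ^ 2 ≤ ε ^ 2 * S ^ 2 := by
    have h1 : frobNorm E ^ 2 = ∑ i, ∑ j, if |A i j| < δ then (A i j) ^ 2 else 0 := by
      rw [frobNorm_sq]
      exact Finset.sum_congr rfl fun i _ => Finset.sum_congr rfl fun j _ => by
        rw [hE]; split_ifs <;> simp
    have h2 : ε ^ 2 * frobNorm A ^ 2 / (frobNorm A ^ 2 / S ^ 2) = ε ^ 2 * S ^ 2 := by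
      field_simp
    rw [h1]
    calc _ ≤ ε ^ 2 * frobNorm A ^ 2 / (frobNorm A ^ 2 / specNorm A ^ 2) := htrunc
      _ = ε ^ 2 * S ^ 2 := h2
  have hEle : frobNorm E ≤ ε * S := by
    nlinarith [frobNorm_nonneg E, mul_pos hε hSpos]
  -- key bound for any V in the Stiefel set
  have key : ∀ V : Matrix (Fin n) (Fin k) ℝ, Vᵀ * V = 1 →
      |frobNorm (A * V) ^ 2 - frobNorm (At * V) ^ 2| ≤ (k : ℝ) * ε * S ^ 2 * (2 + ε) := by
    intro V hV
    set a := frobNorm (A * V) with ha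
    set b := frobNorm (At * V) with hb
    set e := frobNorm (E * V) with he
    have hsub : A * V - At * V = E * V := by rw [hEdef, Matrix.sub_mul]
    have h1 : a - b ≤ e := by
      have := frobNorm_sub_le (A * V) (At * V); rw [hsub] at this; exact this
    have h2 : b - a ≤ e := by
      have t := frobNorm_sub_le (At * V) (A * V)
      have hsub2 : At * V - A * V = -(E * V) := by rw [← hsub, neg_sub]
      rw [hsub2] at t
      have hneg : frobNorm (-(E * V)) = e := by
        rw [he]; unfold frobNorm; congr 1
        exact Finset.sum_congr rfl fun i _ => Finset.sum_congr rfl fun j _ => by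
          rw [Matrix.neg_apply, neg_sq]
      rw [hneg] at t; exact t
    have hele : e ≤ ε * S := le_trans (frob_mul_le_frob E V hV) hEle
    have ha2 : a ^ 2 ≤ (k : ℝ) * S ^ 2 := frob_mul_le_spec A V hV
    have hanneg : 0 ≤ a := frobNorm_nonneg _
    have hbnneg : 0 ≤ b := frobNorm_nonneg _
    have henneg : 0 ≤ e := frobNorm_nonneg _
    have hk1 : (1 : ℝ) ≤ (k : ℝ) := by exact_mod_cast hk
    have hak : a ≤ (k : ℝ) * S := by
      have hksq : a ^ 2 ≤ ((k:ℝ) * S) ^ 2 := by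
        have hkk : 0 ≤ ((k:ℝ) - 1) * (k:ℝ) * S ^ 2 :=
          mul_nonneg (mul_nonneg (sub_nonneg.mpr hk1) (by positivity)) (sq_nonneg S)
        nlinarith [ha2, hkk]
      calc a = Real.sqrt (a ^ 2) := (Real.sqrt_sq hanneg).symm
        _ ≤ Real.sqrt (((k:ℝ) * S) ^ 2) := Real.sqrt_le_sqrt hksq
        _ = (k:ℝ) * S := Real.sqrt_sq (by positivity)
    have hbk : b ≤ (k : ℝ) * S + ε * S := by linarith
    have habs : |a^2 - b^2| ≤ e * (a + b) := by
      have hfac : a^2 - b^2 = (a-b)*(a+b) := by ring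
      rw [hfac, abs_mul, abs_of_nonneg (by linarith : (0:ℝ) ≤ a+b)]
      apply mul_le_mul_of_nonneg_right _ (by linarith)
      rw [abs_le]; constructor <;> linarith
    have hfin : e * (a+b) ≤ (k:ℝ)*ε*S^2*(2+ε) := by
      have h5 : a + b ≤ 2*(k:ℝ)*S + ε*S := by linarith
      calc e*(a+b) ≤ (ε*S) * (2*(k:ℝ)*S + ε*S) :=
            mul_le_mul hele h5 (by linarith) (by positivity)
        _ = ε*S^2*(2*(k:ℝ) + ε) := by ring
        _ ≤ (k:ℝ)*ε*S^2*(2+ε) := by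
            nlinarith [mul_nonneg (mul_nonneg hε.le (sq_nonneg S)) hε.le, hk1]
    exact habs.trans hfin
  have hVt1 := hVtstar.1
  have hVs1 := hVstar.1
  have e1 : Matrix.trace (Vtstarᵀ * Aᵀ * A * Vtstar) = frobNorm (A * Vtstar) ^ 2 :=
    trace_eq_frob_sq A Vtstar
  have e2 : Matrix.trace (Vtstarᵀ * Atᵀ * At * Vtstar) = frobNorm (At * Vtstar) ^ 2 :=
    trace_eq_frob_sq At Vtstar
  have e3 : Matrix.trace (Vstarᵀ * Atᵀ * At * Vstar) = frobNorm (At * Vstar) ^ 2 :=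
    trace_eq_frob_sq At Vstar
  have e4 : Matrix.trace (Vstarᵀ * Aᵀ * A * Vstar) = frobNorm (A * Vstar) ^ 2 :=
    trace_eq_frob_sq A Vstar
  have k1 := key Vtstar hVt1
  have k2 := key Vstar hVs1
  have hmax := hVtstarMax Vstar hVstar
  rw [abs_le] at k1 k2
  rw [e1, e4]
  rw [e2, e3] at hmax
  have hD : 2*(k:ℝ)*ε*S^2*(2+ε) = 2*((k:ℝ)*ε*S^2*(2+ε)) := by ring
  linarith [k1.1, k1.2, k2.1, k2.2]
end
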